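/- Let R be a commutative ring, n ≥ 3 a natural number, and s, t ∈ R. For all natural numbers p, q, k, m there exist natural numbers l and n′, depending only on n, p, q, k, m and not on the ideals 𝔞, 𝔟, such that for all ideals 𝔞, 𝔟 of R, all a ∈ 𝔞, b ∈ 𝔟, and all pairs of indices i ≠ j and i′ ≠ j′, the commutator [e_{ij}(F(t^l·a)·F(s)^{−k}), e_{i′j′}(F(s^{n′}·b)·F(t)^{−m})] lies in the subgroup ⁅E(n, s^p t^q R, s^p t^q 𝔞), E(n, s^p t^q R, s^p t^q 𝔟)⁆ of SL(n, R_{st}). (Type A_{n−1} instance of the paper's base-of-induction lemma of the relative commutator calculus; for type A the hypothesis 2 ∈ R* is not needed.) -/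

import Mathlib

open Matrix
open scoped commutatorElement

/-- `SL n R` : the special linear group of degree `n` over `R`,
the simply connected Chevalley group of type `A_{n-1}`. -/
abbrev SL (n : ℕ) (R : Type*) [CommRing R] := Matrix.SpecialLinearGroup (Fin n) R

/-- The elementary transvection `e_{ij}(a) = 1 + a·E_{ij}` as an element of `SL n R`. -/
def elemTransv {n : ℕ} {R : Type*} [CommRing R] (i j : Fin n) (h : i ≠ j) (a : R) :
    SL n R :=
  ⟨Matrix.transvection i j a, Matrix.det_transvection_of_ne i j h a⟩

/-- The set of elementary transvections with parameters in `S`. -/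
def transvSet (n : ℕ) {R : Type*} [CommRing R] (S : Set R) : Set (SL n R) :=
  { x | ∃ i j : Fin n, ∃ h : i ≠ j, ∃ a ∈ S, x = elemTransv i j h a }

/-- `E(n,S)` : the subgroup generated by elementary transvections with parameters in `S`. -/
def Esub (n : ℕ) {R : Type*} [CommRing R] (S : Set R) : Subgroup (SL n R) :=
  Subgroup.closure (transvSet n S)

/-- `E(n,T,S)` : the normal closure of `E(n,S)` in `E(n,T)`, i.e. the subgroup
generated by the conjugates of elementary generators of level `S` by elements
of `E(n,T)`. -/
def relESet (n : ℕ) {R : Type*} [CommRing R] (T S : Set R) : Subgroup (SL n R) :=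
  Subgroup.closure
    { x | ∃ g ∈ Esub n T, ∃ y ∈ transvSet n S, x = g * y * g⁻¹ }

/-- `E(n,R,I)` : the relative elementary subgroup, the normal closure of
`E(n,I)` in the absolute elementary subgroup `E(n,R)`. -/
def relE (n : ℕ) {R : Type*} [CommRing R] (I : Ideal R) : Subgroup (SL n R) :=
  relESet n (Set.univ : Set R) (I : Set R)

/-- The reduction homomorphism `SL(n,R) → SL(n,R/I)`. -/
def redMap (n : ℕ) {R : Type*} [CommRing R] (I : Ideal R) : SL n R →* SL n (R ⧸ I) :=
  Matrix.SpecialLinearGroup.map (Ideal.Quotient.mk I)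

/-- `SL(n,R,I)` : the principal congruence subgroup of level `I`. -/
def SLcong (n : ℕ) {R : Type*} [CommRing R] (I : Ideal R) : Subgroup (SL n R) :=
  (redMap n I).ker

/-- `C(n,R,I)` : the full congruence subgroup of level `I`. -/
def Ccong (n : ℕ) {R : Type*} [CommRing R] (I : Ideal R) : Subgroup (SL n R) :=
  Subgroup.comap (redMap n I) (Subgroup.center (SL n (R ⧸ I)))

/-- `s^p t^q 𝔞 = {F(s^p·t^q·c) : c ∈ S} ⊆ R_{st}`, where
`F : R → R_{st} = Localization.Away (s·t)` is the canonical map. -/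
def stMulSet {R : Type*} [CommRing R] (s t : R) (p q : ℕ) (S : Set R) :
    Set (Localization.Away (s * t)) :=
  { x | ∃ c ∈ S, x = algebraMap R (Localization.Away (s * t)) (s ^ p * t ^ q * c) }


/-! ### Auxiliary material for the proof -/

section GroupIdentities
variable {G : Type*} [Group G]

private lemma gid1 (a b c : G) : ⁅a, b*c⁆ = ⁅a,b⁆ * (b * ⁅a,c⁆ * b⁻¹) := by group

private lemma gid2 (g a b : G) : g * ⁅a,b⁆ * g⁻¹ = ⁅g*a*g⁻¹, g*b*g⁻¹⁆ := by group

private lemma gid3 (g x : G) : g*x*g⁻¹ = ⁅g,x⁆ * x := by group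

private lemma gid4 (u v w : G) : ⁅u, v*w*v⁻¹*w⁻¹⁆
    = ⁅u,v⁆ * (v * (⁅u,w⁆ * (w * (⁅u,v⁻¹⁆ * (v⁻¹ * ⁅u,w⁻¹⁆ * v)) * w⁻¹)) * v⁻¹) := by group

private lemma gid5 (u v w : G) (E2 : G) (h : ⁅u,w⁻¹⁆ = E2⁻¹) (h2 : ⁅u,w⁆ = E2) :
    ⁅u,w⁆ * (w * (⁅u,v⁻¹⁆ * (v⁻¹ * ⁅u,w⁻¹⁆ * v)) * w⁻¹)
      = (E2 * (w * ⁅u,v⁻¹⁆ * w⁻¹) * E2⁻¹) * (E2 * (w*v⁻¹) * E2⁻¹ * (w*v⁻¹)⁻¹) := by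
  rw [h, h2]; group

private lemma gid6 (a w c : G) (h1 : ⁅a, w⁆ = 1) : ⁅a, w*c⁆ = w * ⁅a,c⁆ * w⁻¹ := by
  rw [gid1, h1, one_mul]

private lemma gid7 (w v z : G) (h : ⁅w, v⁻¹⁆ = z) : w*v⁻¹*w⁻¹ = z * v⁻¹ := by
  rw [← h]; group

private lemma gid8 (w E2 : G) (h : E2 * w = w * E2) : w * E2 * w⁻¹ = E2 := by
  rw [← h]; group

end GroupIdentities

section TransvectionCalculus
variable {N : ℕ} {A : Type*} [CommRing A]

private lemma transv_mul_of_ne {i j k l : Fin N} (h : j ≠ k) (a b : A) :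
    transvection i j a * transvection k l b
      = 1 + single i j a + single k l b := by
  simp only [transvection, add_mul, mul_add, Matrix.one_mul, Matrix.mul_one,
    Matrix.single_mul_single_of_ne a i j k h b]
  abel

private lemma transv_mul_mid {i j k : Fin N} (a b : A) :
    transvection i j a * transvection j k b
      = 1 + single i j a + single j k b + single i k (a*b) := by
  simp only [transvection, add_mul, mul_add, Matrix.one_mul, Matrix.mul_one,
    Matrix.single_mul_single_same a i j k b]
  abel

private lemma elemTransv_add {i j : Fin N} (h : i ≠ j) (a b : A) :
    elemTransv i j h a * elemTransv i j h b = elemTransv i j h (a+b) :=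
  Subtype.ext (by
    show transvection i j a * transvection i j b = _
    exact transvection_mul_transvection_same i j h a b)

private lemma elemTransv_zero {i j : Fin N} (h : i ≠ j) : elemTransv i j h (0:A) = 1 :=
  Subtype.ext (by show transvection i j (0:A) = _; simp)

private lemma elemTransv_inv {i j : Fin N} (h : i ≠ j) (a : A) :
    (elemTransv i j h a)⁻¹ = elemTransv i j h (-a) := by
  apply inv_eq_of_mul_eq_one_right
  rw [elemTransv_add, add_neg_cancel, elemTransv_zero]

private lemma elemTransv_comm {i j k l : Fin N} (hij : i ≠ j) (hkl : k ≠ l)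
    (hjk : j ≠ k) (hli : l ≠ i) (a b : A) :
    elemTransv i j hij a * elemTransv k l hkl b
      = elemTransv k l hkl b * elemTransv i j hij a :=
  Subtype.ext (by
    show transvection i j a * transvection k l b = transvection k l b * transvection i j a
    rw [transv_mul_of_ne hjk, transv_mul_of_ne hli]
    abel)

private lemma elemTransv_commutator_one {i j k l : Fin N} (hij : i ≠ j) (hkl : k ≠ l)
    (hjk : j ≠ k) (hli : l ≠ i) (a b : A) :
    ⁅elemTransv i j hij a, elemTransv k l hkl b⁆ = 1 := by
  rw [commutatorElement_def, elemTransv_comm hij hkl hjk hli]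
  group

private lemma elemTransv_commutator_mid {i j k : Fin N} (hij : i ≠ j) (hjk : j ≠ k)
    (hik : i ≠ k) (a b : A) :
    ⁅elemTransv i j hij a, elemTransv j k hjk b⁆ = elemTransv i k hik (a*b) := by
  have hmul : elemTransv i j hij a * elemTransv j k hjk b
      = elemTransv i k hik (a*b) * (elemTransv j k hjk b * elemTransv i j hij a) := by
    apply Subtype.ext
    show transvection i j a * transvection j k b
      = transvection i k (a*b) * (transvection j k b * transvection i j a)
    rw [transv_mul_mid, transv_mul_of_ne hik.symm]
    simp only [transvection, add_mul, mul_add, Matrix.one_mul, Matrix.mul_one,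
      Matrix.single_mul_single_of_ne (a*b) i k j hjk.symm b,
      Matrix.single_mul_single_of_ne (a*b) i k i hik.symm a]
    abel
  have h2 : ⁅elemTransv i j hij a, elemTransv j k hjk b⁆
      = (elemTransv i j hij a * elemTransv j k hjk b)
        * (elemTransv j k hjk b * elemTransv i j hij a)⁻¹ := by group
  rw [h2, hmul]
  group

private lemma elemTransv_commutator_rev {i j k : Fin N} (hij : i ≠ j) (hki : k ≠ i)
    (hkj : k ≠ j) (a b : A) :
    ⁅elemTransv i j hij a, elemTransv k i hki b⁆ = elemTransv k j hkj (-(b*a)) := by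
  have h1 := elemTransv_commutator_mid hki hij hkj b a
  calc ⁅elemTransv i j hij a, elemTransv k i hki b⁆
      = ⁅elemTransv k i hki b, elemTransv i j hij a⁆⁻¹ := by rw [commutatorElement_inv]
    _ = (elemTransv k j hkj (b*a))⁻¹ := by rw [h1]
    _ = elemTransv k j hkj (-(b*a)) := elemTransv_inv _ _

end TransvectionCalculus

section SubgroupLemmas
variable {N : ℕ} {A : Type*} [CommRing A] {T S S' : Set A}

private lemma mem_transvSet {i j : Fin N} (hij : i ≠ j) {a : A} (ha : a ∈ S) :
    elemTransv i j hij a ∈ transvSet N S := ⟨i, j, hij, a, ha, rfl⟩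

private lemma transv_mem_Esub {i j : Fin N} (hij : i ≠ j) {a : A} (ha : a ∈ S) :
    elemTransv i j hij a ∈ Esub N S := Subgroup.subset_closure (mem_transvSet hij ha)

private lemma transv_mem_relESet {i j : Fin N} (hij : i ≠ j) {a : A} (ha : a ∈ S) :
    elemTransv i j hij a ∈ relESet N T S :=
  Subgroup.subset_closure ⟨1, one_mem _, _, mem_transvSet hij ha, by group⟩

private lemma conj_mem_relESet {g x : SL N A} (hg : g ∈ Esub N T) (hx : x ∈ relESet N T S) :
    g * x * g⁻¹ ∈ relESet N T S := by
  induction hx using Subgroup.closure_induction with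
  | mem y hy =>
      obtain ⟨g', hg', z, hz, rfl⟩ := hy
      exact Subgroup.subset_closure ⟨g * g', mul_mem hg hg', z, hz, by group⟩
  | one => simpa using one_mem _
  | mul a b _ _ ha hb =>
      have h := mul_mem ha hb
      rwa [show g*a*g⁻¹*(g*b*g⁻¹) = g*(a*b)*g⁻¹ by group] at h
  | inv a _ ha =>
      have h := inv_mem ha
      rwa [show (g*a*g⁻¹)⁻¹ = g*a⁻¹*g⁻¹ by group] at h

private lemma conj_mem_commutator {g x : SL N A} (hg : g ∈ Esub N T)
    (hx : x ∈ ⁅relESet N T S, relESet N T S'⁆) :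
    g * x * g⁻¹ ∈ ⁅relESet N T S, relESet N T S'⁆ := by
  have hmap : Subgroup.map (MulAut.conj g).toMonoidHom ⁅relESet N T S, relESet N T S'⁆
      ≤ ⁅relESet N T S, relESet N T S'⁆ := by
    rw [Subgroup.map_commutator]
    apply Subgroup.commutator_mono <;>
      · rintro _ ⟨y, hy, rfl⟩
        simpa [MulAut.conj_apply, mul_assoc] using conj_mem_relESet hg hy
  exact hmap ⟨x, hx, by simp [MulAut.conj_apply, mul_assoc]⟩

end SubgroupLemmas

section LocalizationCalculus
variable {R : Type*} [CommRing R] (s t : R)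

/-- `lM s t a b e r = s^a t^b r / (st)^e` in the localization away from `st`. -/
private def lM (a b e : ℕ) (r : R) : Localization.Away (s*t) :=
  Localization.mk (s^a*t^b*r) ⟨(s*t)^e, e, rfl⟩

private lemma lM_mul (a b e a' b' e' : ℕ) (r r' : R) :
    lM s t a b e r * lM s t a' b' e' r' = lM s t (a+a') (b+b') (e+e') (r*r') := by
  unfold lM
  rw [Localization.mk_mul, Localization.mk_eq_mk_iff, Localization.r_iff_exists]
  exact ⟨1, by push_cast; ring⟩

private lemma lM_eq {a b e a' b' e' : ℕ} {r r' : R}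
    (h : s^a*t^b*r*(s*t)^e' = s^a'*t^b'*r'*(s*t)^e) :
    lM s t a b e r = lM s t a' b' e' r' := by
  unfold lM
  rw [Localization.mk_eq_mk_iff, Localization.r_iff_exists]
  exact ⟨1, by push_cast; linear_combination h⟩

private lemma lM_neg (a b e : ℕ) (r : R) : lM s t a b e (-r) = - lM s t a b e r := by
  unfold lM
  rw [Localization.neg_mk]
  congr 1
  ring

private lemma lM_algebraMap (a b : ℕ) (r : R) :
    lM s t a b 0 r = algebraMap R (Localization.Away (s*t)) (s^a*t^b*r) := by
  unfold lM
  rw [← Localization.mk_one_eq_algebraMap, Localization.mk_eq_mk_iff, Localization.r_iff_exists]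
  exact ⟨1, by push_cast; ring⟩

variable (p q : ℕ)

private lemma lM_mem_stMulSet {S : Set R} (A B : ℕ) {r : R} (hr : s^A*t^B*r ∈ S) :
    lM s t (p+A) (q+B) 0 r ∈ stMulSet s t p q S :=
  ⟨s^A*t^B*r, hr, by rw [lM_algebraMap]; congr 1; ring⟩

private lemma lM_mem_univ (A B : ℕ) (r : R) :
    lM s t (p+A) (q+B) 0 r ∈ stMulSet s t p q (Set.univ : Set R) :=
  lM_mem_stMulSet s t p q A B trivial

end LocalizationCalculus

private lemma exists_third {n : ℕ} (hn : 3 ≤ n) (i j : Fin n) :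
    ∃ h : Fin n, h ≠ i ∧ h ≠ j := by
  by_contra hc
  push_neg at hc
  have hsub : (Finset.univ : Finset (Fin n)) ⊆ {i, j} := by
    intro h _
    rcases eq_or_ne h i with rfl | hne
    · simp
    · simp [hc h hne]
  have h1 := Finset.card_le_card hsub
  have h2 : ({i, j} : Finset (Fin n)).card ≤ 2 :=
    (Finset.card_insert_le _ _).trans (by simp)
  simp only [Finset.card_univ, Fintype.card_fin] at h1
  omega

/-- Base of induction of the relative commutator calculus (type `A_{n-1}`):
given `p, q, k, m` there exist `l, n'` (independent of the ideals) such that for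
all ideals `𝔞, 𝔟 ⊴ R`, all `a ∈ 𝔞`, `b ∈ 𝔟` and all index pairs, the commutator
`[e_{ij}(F(t^l·a)·F(s)^{-k}), e_{i'j'}(F(s^{n'}·b)·F(t)^{-m})]` lies in
`⁅E(n,s^pt^qR,s^pt^q𝔞), E(n,s^pt^qR,s^pt^q𝔟)⁆` inside `SL(n,R_{st})`.
Here `F(t^l·a)·F(s)^{-k} = Localization.mk (t^l·a·t^k) ⟨(s·t)^k, _⟩` and
`F(s^{n'}·b)·F(t)^{-m} = Localization.mk (s^{n'}·b·s^m) ⟨(s·t)^m, _⟩`. -/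
theorem exists_commutator_calculus_base
    {R : Type*} [CommRing R] (n : ℕ) (hn : 3 ≤ n) (s t : R) (p q k m : ℕ) :
    ∃ l n' : ℕ, ∀ a b : Ideal R, ∀ x ∈ a, ∀ y ∈ b,
      ∀ i j : Fin n, ∀ hij : i ≠ j, ∀ i' j' : Fin n, ∀ hij' : i' ≠ j',
        ⁅elemTransv i j hij
            (Localization.mk (t ^ l * x * t ^ k) (⟨(s * t) ^ k, k, rfl⟩ : Submonoid.powers (s * t))),
          elemTransv i' j' hij'
            (Localization.mk (s ^ n' * y * s ^ m) (⟨(s * t) ^ m, m, rfl⟩ : Submonoid.powers (s * t)))⁆ ∈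
          ⁅relESet n (stMulSet s t p q (Set.univ : Set R))
              (stMulSet s t p q (a : Set R)),
            relESet n (stMulSet s t p q (Set.univ : Set R))
              (stMulSet s t p q (b : Set R))⁆ := by
  classical
  refine ⟨3*q+2*m, 2*k+4*p, ?_⟩
  intro 𝔞 𝔟 x hx y hy i j hij i' j' hij'
  have hα : Localization.mk (t ^ (3*q+2*m) * x * t ^ k)
      (⟨(s * t) ^ k, k, rfl⟩ : Submonoid.powers (s * t)) = lM s t 0 (3*q+2*m+k) k x := by
    unfold lM; congr 1; ring
  have hβ : Localization.mk (s ^ (2*k+4*p) * y * s ^ m)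
      (⟨(s * t) ^ m, m, rfl⟩ : Submonoid.powers (s * t)) = lM s t (2*k+4*p+m) 0 m y := by
    unfold lM; congr 1; ring
  rw [hα, hβ]
  set T : Set (Localization.Away (s*t)) := stMulSet s t p q (Set.univ : Set R) with hTdef
  -- membership helpers
  have memA : ∀ (a1 b1 : Fin n) (hab : a1 ≠ b1) (A B : ℕ) (r : R), r ∈ 𝔞 →
      elemTransv a1 b1 hab (lM s t (p+A) (q+B) 0 r)
        ∈ relESet n T (stMulSet s t p q (𝔞 : Set R)) :=
    fun a1 b1 hab A B r hr =>
      transv_mem_relESet hab (lM_mem_stMulSet s t p q A B (Ideal.mul_mem_left _ _ hr))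
  have memB : ∀ (a1 b1 : Fin n) (hab : a1 ≠ b1) (A B : ℕ) (r : R), r ∈ 𝔟 →
      elemTransv a1 b1 hab (lM s t (p+A) (q+B) 0 r)
        ∈ relESet n T (stMulSet s t p q (𝔟 : Set R)) :=
    fun a1 b1 hab A B r hr =>
      transv_mem_relESet hab (lM_mem_stMulSet s t p q A B (Ideal.mul_mem_left _ _ hr))
  have memT : ∀ (a1 b1 : Fin n) (hab : a1 ≠ b1) (A B : ℕ) (r : R),
      elemTransv a1 b1 hab (lM s t (p+A) (q+B) 0 r) ∈ Esub n T :=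
    fun a1 b1 hab A B r => transv_mem_Esub hab (lM_mem_univ s t p q A B r)
  have conjG : ∀ (g : SL n (Localization.Away (s*t))), g ∈ Esub n T →
      ∀ (x' : SL n (Localization.Away (s*t))),
        x' ∈ ⁅relESet n T (stMulSet s t p q (𝔞 : Set R)),
              relESet n T (stMulSet s t p q (𝔟 : Set R))⁆ →
        g * x' * g⁻¹ ∈ ⁅relESet n T (stMulSet s t p q (𝔞 : Set R)),
              relESet n T (stMulSet s t p q (𝔟 : Set R))⁆ :=
    fun g hg x' hx' => conj_mem_commutator hg hx'
  by_cases h1 : i' = j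
  · by_cases h2 : j' = i
    · -- Case D : the commutator [e_{ij}(α), e_{ji}(β)]
      subst h1; subst h2
      -- After substitution the first transvection is e_{j' i'}(α) and the second is
      -- e_{i' j'}(β) : the roles are i = j', j = i'.  Pick a third index e.
      obtain ⟨e, heI, heJ⟩ := exists_third hn j' i'
      set u := elemTransv j' i' hij (lM s t 0 (3*q+2*m+k) k x) with hudef
      set z := elemTransv i' j' hij' (lM s t (2*k+4*p+m) 0 m y) with hzdef
      set v := elemTransv i' e heJ.symm (lM s t (p+(k+p)) (q+0) 0 y) with hvdef
      set w := elemTransv e j' heI (lM s t (k+2*p+q+m) 0 (q+m) (1:R)) with hwdef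
      set E2 := elemTransv e i' heJ (lM s t (p+p) (q+(q+m)) 0 (-x)) with hE2def
      have hvinv : v⁻¹ = elemTransv i' e heJ.symm (lM s t (p+(k+p)) (q+0) 0 (-y)) := by
        rw [hvdef, elemTransv_inv]
        congr 1
        exact (lM_neg s t _ _ _ y).symm
      have hvw : ⁅v, w⁆ = z := by
        rw [hvdef, hwdef, hzdef, elemTransv_commutator_mid heJ.symm heI hij']
        congr 1
        simp only [lM_mul]
        exact lM_eq s t (by ring)
      have hzz : z = v * w * v⁻¹ * w⁻¹ := by rw [← hvw, commutatorElement_def]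
      have hE2c : ⁅u, w⁆ = E2 := by
        rw [hudef, hwdef, hE2def, elemTransv_commutator_rev hij heI heJ]
        congr 1
        simp only [lM_mul, ← lM_neg]
        exact lM_eq s t (by ring)
      have hE2cinv : ⁅u, w⁻¹⁆ = E2⁻¹ := by
        rw [hudef, hwdef, hE2def, elemTransv_inv, elemTransv_inv,
          elemTransv_commutator_rev hij heI heJ]
        congr 1
        simp only [lM_mul, ← lM_neg]
        exact lM_eq s t (by ring)
      have hE1 : ⁅u, v⁆ ∈ ⁅relESet n T (stMulSet s t p q (𝔞 : Set R)),
          relESet n T (stMulSet s t p q (𝔟 : Set R))⁆ := by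
        have hsplit : ⁅u, v⁆ = ⁅elemTransv j' i' hij (lM s t (p+0) (q+0) 0 x),
            elemTransv i' e heJ.symm (lM s t (p+0) (q+(2*q+2*m)) 0 y)⁆ := by
          rw [hudef, hvdef, elemTransv_commutator_mid hij heJ.symm heI.symm,
            elemTransv_commutator_mid hij heJ.symm heI.symm]
          congr 1
          simp only [lM_mul]
          exact lM_eq s t (by ring)
        rw [hsplit]
        exact Subgroup.commutator_mem_commutator (memA j' i' hij 0 0 x hx)
          (memB i' e heJ.symm 0 (2*q+2*m) y hy)
      have hUVinv : ⁅u, v⁻¹⁆ = ⁅elemTransv j' i' hij (lM s t (p+0) (q+(q+m)) 0 (-x)),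
          elemTransv i' e heJ.symm (lM s t (p+0) (q+(q+m)) 0 y)⁆ := by
        rw [hvinv, hudef, elemTransv_commutator_mid hij heJ.symm heI.symm,
          elemTransv_commutator_mid hij heJ.symm heI.symm]
        congr 1
        simp only [lM_mul, ← lM_neg]
        exact lM_eq s t (by ring)
      have hT1 : w * ⁅u, v⁻¹⁆ * w⁻¹ ∈ ⁅relESet n T (stMulSet s t p q (𝔞 : Set R)),
          relESet n T (stMulSet s t p q (𝔟 : Set R))⁆ := by
        rw [hUVinv, gid2]
        have hA : w * elemTransv j' i' hij (lM s t (p+0) (q+(q+m)) 0 (-x)) * w⁻¹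
            = elemTransv e i' heJ (lM s t (p+(k+2*p)) (q+0) 0 (-x))
              * elemTransv j' i' hij (lM s t (p+0) (q+(q+m)) 0 (-x)) := by
          rw [gid3, hwdef, elemTransv_commutator_mid heI hij heJ]
          congr 2
          simp only [lM_mul]
          exact lM_eq s t (by ring)
        have hB : w * elemTransv i' e heJ.symm (lM s t (p+0) (q+(q+m)) 0 y) * w⁻¹
            = elemTransv i' j' hij' (lM s t (p+(k+2*p)) (q+0) 0 (-y))
              * elemTransv i' e heJ.symm (lM s t (p+0) (q+(q+m)) 0 y) := by
          rw [gid3, hwdef, elemTransv_commutator_rev heI heJ.symm hij']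
          congr 2
          simp only [lM_mul, ← lM_neg]
          exact lM_eq s t (by ring)
        rw [hA, hB]
        exact Subgroup.commutator_mem_commutator
          (mul_mem (memA e i' heJ (k+2*p) 0 (-x) (neg_mem hx))
            (memA j' i' hij 0 (q+m) (-x) (neg_mem hx)))
          (mul_mem (memB i' j' hij' (k+2*p) 0 (-y) (neg_mem hy))
            (memB i' e heJ.symm 0 (q+m) y hy))
      have hE2T : E2 ∈ Esub n T := by rw [hE2def]; exact memT e i' heJ p (q+m) (-x)
      have hvT : v ∈ Esub n T := by rw [hvdef]; exact memT i' e heJ.symm (k+p) 0 y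
      have hE2w1 : ⁅E2, w⁆ = 1 := by
        rw [hE2def, hwdef]
        exact elemTransv_commutator_one heJ heI heJ.symm heI.symm _ _
      have hE2wc : E2 * w = w * E2 := by
        rw [hE2def, hwdef]
        exact elemTransv_comm heJ heI heJ.symm heI.symm _ _
      have hwE2w : w * E2 * w⁻¹ = E2 := gid8 _ _ hE2wc
      have hwv : ⁅w, v⁻¹⁆ = z := by
        rw [hvinv, hwdef, hzdef, elemTransv_commutator_rev heI heJ.symm hij']
        congr 1
        simp only [lM_mul, ← lM_neg]
        exact lM_eq s t (by ring)
      have hwvw : w * v⁻¹ * w⁻¹ = z * v⁻¹ := gid7 _ _ _ hwv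
      have hE2z : ⁅E2, z⁆ = ⁅elemTransv e i' heJ (lM s t (p+(2*k+4*p)) (q+0) 0 (-x)),
          elemTransv i' j' hij' (lM s t (p+0) (q+0) 0 y)⁆ := by
        rw [hE2def, hzdef, elemTransv_commutator_mid heJ hij' heI,
          elemTransv_commutator_mid heJ hij' heI]
        congr 1
        simp only [lM_mul]
        exact lM_eq s t (by ring)
      have hzE2z : z * E2 * z⁻¹
          = elemTransv e j' heI (lM s t (p+(p+2*k+4*p)) (q+q) 0 (x*y)) * E2 := by
        rw [gid3]
        congr 1
        rw [hE2def, hzdef, elemTransv_commutator_rev hij' heJ heI]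
        congr 1
        simp only [lM_mul, ← lM_neg]
        exact lM_eq s t (by ring)
      have hzv : z * v⁻¹ * z⁻¹ = v⁻¹ := by
        rw [hvinv]
        refine gid8 _ _ ?_
        rw [hzdef]
        exact elemTransv_comm heJ.symm hij' heJ hij _ _
      rw [hzz, gid4]
      refine mul_mem hE1 (conjG v hvT _ ?_)
      rw [gid5 u v w E2 hE2cinv hE2c]
      refine mul_mem (conjG E2 hE2T _ hT1) ?_
      rw [← commutatorElement_def, gid6 E2 w v⁻¹ hE2w1, gid2 w E2 v⁻¹, hwE2w, hwvw,
        gid1 E2 z v⁻¹]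
      refine mul_mem ?_ ?_
      · rw [hE2z]
        exact Subgroup.commutator_mem_commutator
          (memA e i' heJ (2*k+4*p) 0 (-x) (neg_mem hx)) (memB i' j' hij' 0 0 y hy)
      · rw [gid2 z E2 v⁻¹, hzE2z, hzv, hvinv]
        exact Subgroup.commutator_mem_commutator
          (mul_mem (memA e j' heI (p+2*k+4*p) q (x*y) (Ideal.mul_mem_right _ _ hx))
            (by rw [hE2def]; exact memA e i' heJ p (q+m) (-x) (neg_mem hx)))
          (memB i' e heJ.symm (k+p) 0 (-y) (neg_mem hy))
    · -- Case B : i' = j, j' ∉ {i}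
      subst h1
      have hij'2 : i ≠ j' := fun he => h2 he.symm
      rw [elemTransv_commutator_mid hij hij' hij'2]
      obtain ⟨g, hgi, hgj'⟩ := exists_third hn i j'
      have hsplit : lM s t 0 (3*q+2*m+k) k x * lM s t (2*k+4*p+m) 0 m y
          = lM s t (p+(k+2*p)) (q+0) 0 x * lM s t (p+0) (q+(q+m)) 0 y := by
        rw [lM_mul, lM_mul]; exact lM_eq s t (by ring)
      rw [hsplit, ← elemTransv_commutator_mid hgi.symm hgj' hij'2]
      exact Subgroup.commutator_mem_commutator
        (memA i g hgi.symm (k+2*p) 0 x hx) (memB g j' hgj' 0 (q+m) y hy)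
  · by_cases h2 : j' = i
    · -- Case C : j' = i, i' ∉ {j}
      subst h2
      have hi'j : i' ≠ j := h1
      rw [elemTransv_commutator_rev hij hij' hi'j]
      obtain ⟨g, hgi', hgj⟩ := exists_third hn i' j
      have hsplit : -(lM s t (2*k+4*p+m) 0 m y * lM s t 0 (3*q+2*m+k) k x)
          = lM s t (p+(k+2*p)) (q+0) 0 (-x) * lM s t (p+0) (q+(q+m)) 0 y := by
        rw [lM_mul, lM_mul, ← lM_neg]; exact lM_eq s t (by ring)
      rw [hsplit, ← elemTransv_commutator_mid hgi'.symm hgj hi'j]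
      exact Subgroup.commutator_mem_commutator
        (memA i' g hgi'.symm (k+2*p) 0 (-x) (neg_mem hx)) (memB g j hgj 0 (q+m) y hy)
    · -- Case A : disjoint indices, the commutator is trivial
      rw [elemTransv_commutator_one hij hij' (fun he => h1 he.symm) h2]
      exact one_mem _
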